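/- Suppose k = g^a for some a ∈ g and x0 ∈ R(m). Let g0 = {z ∈ g : [z,β] = 0 for all β ∈ k^{x0}} be the centralizer of k^{x0} in g. Then a ∈ g0, x0 ∈ g0, and g^{x0} decomposes as the direct sum of subspaces g^{x0} = (g^{x0} ∩ g0) ⊕ ⁅k^{x0}, k^{x0}⁆, where g^{x0} ∩ g0 equals the center z(g^{x0}) of g^{x0}. -/

import Mathlib

open Module

/-- The centralizer of `x` in a real Lie algebra, as a submodule. -/
def cent (g : Type*) [LieRing g] [LieAlgebra ℝ g] (x : g) : Submodule ℝ g where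
  carrier := {z : g | ⁅x, z⁆ = 0}
  add_mem' := by
    intro u v hu hv
    simp only [Set.mem_setOf_eq] at *
    simp [lie_add, hu, hv]
  zero_mem' := by simp
  smul_mem' := by
    intro c z hz
    simp only [Set.mem_setOf_eq] at *
    simp [lie_smul, hz]

theorem stmt14 {g : Type*} [LieRing g] [LieAlgebra ℝ g] [FiniteDimensional ℝ g]
    -- an ad-invariant inner product on g (g is of compact type)
    (B : g →ₗ[ℝ] g →ₗ[ℝ] ℝ)
    (hsymm : ∀ x y : g, B x y = B y x)
    (hpos : ∀ x : g, x ≠ 0 → 0 < B x x)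
    (hinv : ∀ x y z : g, B ⁅z, x⁆ y + B x ⁅z, y⁆ = 0)
    -- k = g^a and m = k^⊥
    (a : g) (k m : Submodule ℝ g)
    (hkdef : k = cent g a)
    (hm : ∀ y : g, y ∈ m ↔ ∀ z ∈ k, B z y = 0)
    -- q(m), p(m) and R(m)
    (qm pm : ℕ)
    (hqm : qm = sInf {d : ℕ | ∃ y ∈ m, d = finrank ℝ (cent g y)})
    (hpm : pm = sInf {d : ℕ | ∃ y ∈ m, d = finrank ℝ ↥(cent g y ⊓ k)})
    (Rm : Set g)
    (hRm : Rm = {x : g | x ∈ m ∧ finrank ℝ (cent g x) = qm ∧ finrank ℝ ↥(cent g x ⊓ k) = pm})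
    -- the known fact (2.5): for x ∈ R(m), ⁅g^x, g^x⁆ = ⁅k^x, k^x⁆ ⊆ k
    (h25 : ∀ x ∈ Rm,
      Submodule.span ℝ {w : g | ∃ u ∈ cent g x, ∃ v ∈ cent g x, w = ⁅u, v⁆}
        = Submodule.span ℝ {w : g | ∃ u ∈ cent g x ⊓ k, ∃ v ∈ cent g x ⊓ k, w = ⁅u, v⁆}
      ∧ Submodule.span ℝ {w : g | ∃ u ∈ cent g x ⊓ k, ∃ v ∈ cent g x ⊓ k, w = ⁅u, v⁆} ≤ k)
    -- x0 ∈ R(m) and g0 = the centralizer of k^{x0} in g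
    (x0 : g) (hx0 : x0 ∈ Rm)
    (g0 : Submodule ℝ g)
    (hg0 : ∀ z : g, z ∈ g0 ↔ ∀ β ∈ cent g x0 ⊓ k, ⁅z, β⁆ = 0) :
    a ∈ g0 ∧ x0 ∈ g0 ∧
    -- g^{x0} = (g^{x0} ∩ g0) ⊕ ⁅k^{x0}, k^{x0}⁆
    ((cent g x0 ⊓ g0) ⊔
        Submodule.span ℝ {w : g | ∃ u ∈ cent g x0 ⊓ k, ∃ v ∈ cent g x0 ⊓ k, w = ⁅u, v⁆}
      = cent g x0) ∧
    ((cent g x0 ⊓ g0) ⊓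
        Submodule.span ℝ {w : g | ∃ u ∈ cent g x0 ⊓ k, ∃ v ∈ cent g x0 ⊓ k, w = ⁅u, v⁆}
      = ⊥) ∧
    -- g^{x0} ∩ g0 is the center of g^{x0}
    (∀ z : g, z ∈ cent g x0 ⊓ g0 ↔ (z ∈ cent g x0 ∧ ∀ w ∈ cent g x0, ⁅z, w⁆ = 0)) := by
  -- basic facts
  have hzero : ∀ x : g, B x x = 0 → x = 0 := by
    intro x hx
    by_contra hne
    exact absurd hx (ne_of_gt (hpos x hne))
  have hcent : ∀ x z : g, z ∈ cent g x ↔ ⁅x, z⁆ = 0 := fun x z => Iff.rfl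
  set c := cent g x0 with hc
  set K := cent g x0 ⊓ k with hK
  set S := Submodule.span ℝ {w : g | ∃ u ∈ K, ∃ v ∈ K, w = ⁅u, v⁆} with hS
  obtain ⟨hspan_eq, hSk⟩ := h25 x0 hx0
  -- c is a subalgebra
  have hc_lie : ∀ u ∈ c, ∀ v ∈ c, ⁅u, v⁆ ∈ c := by
    intro u hu v hv
    rw [hcent] at *
    rw [leibniz_lie, hu, hv]
    simp
  -- K is a subalgebra
  have hK_lie : ∀ u ∈ K, ∀ v ∈ K, ⁅u, v⁆ ∈ K := by
    intro u hu v hv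
    obtain ⟨hu1, hu2⟩ := Submodule.mem_inf.mp hu
    obtain ⟨hv1, hv2⟩ := Submodule.mem_inf.mp hv
    refine Submodule.mem_inf.mpr ⟨hc_lie u hu1 v hv1, ?_⟩
    rw [hkdef] at *
    rw [hcent] at *
    rw [leibniz_lie, hu2, hv2]
    simp
  -- S ≤ c
  have hS_le_c : S ≤ c := by
    rw [hS]
    apply Submodule.span_le.mpr
    rintro w ⟨u, hu, v, hv, rfl⟩
    exact hc_lie u (Submodule.mem_inf.mp hu).1 v (Submodule.mem_inf.mp hv).1
  -- bracket of c-elements lies in S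
  have hcc_S : ∀ u ∈ c, ∀ v ∈ c, ⁅u, v⁆ ∈ S := by
    intro u hu v hv
    have : ⁅u, v⁆ ∈ Submodule.span ℝ {w : g | ∃ u ∈ c, ∃ v ∈ c, w = ⁅u, v⁆} :=
      Submodule.subset_span ⟨u, hu, v, hv, rfl⟩
    rwa [hspan_eq] at this
  -- bracketing with an element of K preserves S
  have hKS : ∀ β ∈ K, ∀ s ∈ S, ⁅β, s⁆ ∈ S := by
    intro β hβ
    have : S ≤ S.comap (LieAlgebra.ad ℝ g β) := by
      rw [hS]
      apply Submodule.span_le.mpr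
      rintro w ⟨u, hu, v, hv, rfl⟩
      simp only [SetLike.mem_coe, Submodule.mem_comap, LieAlgebra.ad_apply]
      rw [leibniz_lie]
      exact add_mem (Submodule.subset_span ⟨⁅β, u⁆, hK_lie β hβ u hu, v, hv, rfl⟩)
        (Submodule.subset_span ⟨u, hu, ⁅β, v⁆, hK_lie β hβ v hv, rfl⟩)
    intro s hs
    exact this hs
  -- bracketing with an element of g0 kills S
  have hg0S : ∀ z ∈ g0, ∀ s ∈ S, ⁅z, s⁆ = 0 := by
    intro z hz
    have : S ≤ LinearMap.ker (LieAlgebra.ad ℝ g z) := by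
      rw [hS]
      apply Submodule.span_le.mpr
      rintro w ⟨u, hu, v, hv, rfl⟩
      simp only [SetLike.mem_coe, LinearMap.mem_ker, LieAlgebra.ad_apply]
      rw [leibniz_lie, (hg0 z).mp hz u hu, (hg0 z).mp hz v hv]
      simp
    intro s hs
    exact this hs
  -- elements of g0 are B-orthogonal to S
  have hg0_perp : ∀ z ∈ g0, ∀ s ∈ S, B z s = 0 := by
    intro z hz
    have : S ≤ LinearMap.ker (B z) := by
      rw [hS]
      apply Submodule.span_le.mpr
      rintro w ⟨u, hu, v, hv, rfl⟩
      simp only [SetLike.mem_coe, LinearMap.mem_ker]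
      have h := hinv z v u
      have hu0 : ⁅u, z⁆ = 0 := by
        rw [← lie_skew, (hg0 z).mp hz u hu, neg_zero]
      calc B z ⁅u, v⁆ = -B ⁅u, z⁆ v := by linarith [hinv z v u]
        _ = 0 := by rw [hu0]; simp
    intro s hs
    simpa using this hs
  -- key: an element of c that is B-orthogonal to S lies in g0
  have hperp_g0 : ∀ w ∈ c, (∀ s ∈ S, B w s = 0) → w ∈ g0 := by
    intro w hw hperp
    rw [hg0]
    intro β hβ
    have hβc : β ∈ c := (Submodule.mem_inf.mp hβ).1
    set t := ⁅β, w⁆ with ht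
    have htS : t ∈ S := hcc_S β hβc w hw
    have htt : B t t = 0 := by
      have h1 := hinv w t β
      have h2 : B w ⁅β, t⁆ = 0 := hperp _ (hKS β hβ t htS)
      linarith
    have h0 : ⁅β, w⁆ = 0 := hzero t htt
    rw [← lie_skew, h0, neg_zero]
  -- statement 1 : a ∈ g0
  refine ⟨?_, ?_, ?_, ?_, ?_⟩
  · rw [hg0]
    intro β hβ
    have : β ∈ k := (Submodule.mem_inf.mp hβ).2
    rw [hkdef, hcent] at this
    exact this
  -- statement 2 : x0 ∈ g0
  · rw [hg0]
    intro β hβ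
    have : β ∈ c := (Submodule.mem_inf.mp hβ).1
    rw [hcent] at this
    exact this
  -- statement 3 : (c ⊓ g0) ⊔ S = c
  · apply le_antisymm
    · exact sup_le inf_le_left hS_le_c
    · -- use the orthogonal decomposition g = S ⊕ S^⊥
      have hrefl : B.IsRefl := by
        intro x y h
        rw [hsymm]; exact h
      have hnd : (LinearMap.BilinForm.restrict B S).Nondegenerate := by
        refine ⟨?_, ?_⟩ <;>
        · intro x hx
          have := hx x
          simp only [LinearMap.BilinForm.restrict_apply] at this
          exact Subtype.ext (hzero _ this)
      have hcompl : IsCompl S (LinearMap.BilinForm.orthogonal B S) :=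
        (LinearMap.BilinForm.restrict_nondegenerate_iff_isCompl_orthogonal hrefl).mp hnd
      intro x hxc
      have hx_top : x ∈ S ⊔ LinearMap.BilinForm.orthogonal B S := by
        rw [hcompl.sup_eq_top]; trivial
      obtain ⟨s, hs, t, htperp, rfl⟩ := Submodule.mem_sup.mp hx_top
      have htc : t ∈ c := by
        have : (s + t) - s ∈ c := Submodule.sub_mem c hxc (hS_le_c hs)
        simpa using this
      have htg0 : t ∈ g0 := by
        apply hperp_g0 t htc
        intro u hu
        rw [hsymm]
        exact htperp u hu
      exact Submodule.add_mem _ (le_sup_right (α := Submodule ℝ g) hs)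
        (le_sup_left (α := Submodule ℝ g) (Submodule.mem_inf.mpr ⟨htc, htg0⟩))
  -- statement 4 : (c ⊓ g0) ⊓ S = ⊥
  · rw [eq_bot_iff]
    intro z hz
    obtain ⟨hz1, hzS⟩ := Submodule.mem_inf.mp hz
    obtain ⟨hzc, hzg0⟩ := Submodule.mem_inf.mp hz1
    have : B z z = 0 := hg0_perp z hzg0 z hzS
    simpa using hzero z this
  -- statement 5 : c ⊓ g0 = center of c
  · intro z
    constructor
    · intro hz
      obtain ⟨hzc, hzg0⟩ := Submodule.mem_inf.mp hz
      refine ⟨hzc, ?_⟩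
      intro w hw
      set t := ⁅z, w⁆ with ht
      have htS : t ∈ S := hcc_S z hzc w hw
      have htt : B t t = 0 := by
        have h1 := hinv w t z
        have h2 : ⁅z, t⁆ = 0 := hg0S z hzg0 t htS
        rw [h2] at h1
        simpa using h1
      exact hzero t htt
    · rintro ⟨hzc, hcentral⟩
      refine Submodule.mem_inf.mpr ⟨hzc, ?_⟩
      rw [hg0]
      intro β hβ
      exact hcentral β (Submodule.mem_inf.mp hβ).1
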